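/- For any connected graph with n vertices, m edges, and m×n incidence matrix G over F₂, there exists an (n−1)×m matrix T' that is (3,2)-sparse and an n×n permutation matrix P' such that T'·G·P' = H_R, where H_R ∈ F₂^{(n−1)×n} is the canonical full-rank parity check matrix of the repetition code (row i has 1s in columns i and i+1). -/

import Mathlib

open Matrix Finset

/-- Hamming weight of a vector over `F₂`. -/
def hwt {E : Type*} [Fintype E] (v : E → ZMod 2) : ℕ :=
  (Finset.univ.filter fun e => v e ≠ 0).card

/-- A matrix over `F₂` is `(r, c)`-sparse. -/
def Sparse {A B : Type*} [Fintype A] [Fintype B]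
    (M : Matrix A B (ZMod 2)) (r c : ℕ) : Prop :=
  (∀ i, hwt (M i) ≤ r) ∧ (∀ j, hwt (fun i => M i j) ≤ c)

/-- `P` is a permutation matrix. -/
def IsPermMatrix {n : ℕ} (P : Matrix (Fin n) (Fin n) (ZMod 2)) : Prop :=
  ∃ σ : Equiv.Perm (Fin n), ∀ i j, P i j = if σ i = j then 1 else 0

/-- `G` is the incidence matrix of a graph: every row (edge) has exactly two `1`s. -/
def IsIncidence {m n : ℕ} (G : Matrix (Fin m) (Fin n) (ZMod 2)) : Prop :=
  ∀ e, hwt (G e) = 2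

/-- The graph determined by an incidence matrix. -/
def incGraph {m n : ℕ} (G : Matrix (Fin m) (Fin n) (ZMod 2)) : SimpleGraph (Fin n) :=
  SimpleGraph.fromRel (fun i j => ∃ e, G e i ≠ 0 ∧ G e j ≠ 0)

/-- The canonical full-rank parity-check matrix `H_R ∈ F₂^{(n−1)×n}` of the repetition
code: row `i` has `1`s in columns `i` and `i+1`. -/
def HR (n : ℕ) : Matrix (Fin (n - 1)) (Fin n) (ZMod 2) :=
  Matrix.of fun i j => if (j : ℕ) = (i : ℕ) ∨ (j : ℕ) = (i : ℕ) + 1 then 1 else 0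

namespace SkipTreeAux

variable {n m : ℕ}

/-- indicator-pair function -/
def chi (s : Sym2 (Fin n)) : Fin n → ZMod 2 :=
  Sym2.lift ⟨fun x y v => (if v = x then 1 else 0) + (if v = y then 1 else 0),
    by intro x y; funext v; exact add_comm _ _⟩ s

@[simp] lemma chi_mk (x y v : Fin n) :
    chi s(x, y) v = (if v = x then 1 else 0) + (if v = y then 1 else 0) := rfl

variable (G : Matrix (Fin m) (Fin n) (ZMod 2))

/-- adjacency -/
def Adj2 (x y : Fin n) : Prop := x ≠ y ∧ ∃ e, G e x ≠ 0 ∧ G e y ≠ 0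

lemma Adj2.symm {x y : Fin n} (h : Adj2 G x y) : Adj2 G y x :=
  ⟨h.1.symm, h.2.imp fun _ he => ⟨he.2, he.1⟩⟩

/-- a short walk witness from `a` to `b` -/
def WalkOK (S : Finset (Fin n)) (a b : Fin n) (w : List (Sym2 (Fin n))) : Prop :=
  w.length ≤ 3 ∧
  (∀ s ∈ w, ∃ x y, s = s(x, y) ∧ Adj2 G x y ∧ x ∈ S ∧ y ∈ S) ∧
  (w.map chi).sum = chi s(a, b)

lemma chi_swap (a b : Fin n) : chi s(a, b) = chi s(b, a) := by
  rw [Sym2.eq_swap]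

lemma WalkOK.symm {S a b w} (h : WalkOK G S a b w) : WalkOK G S b a w :=
  ⟨h.1, h.2.1, h.2.2.trans (chi_swap a b)⟩

lemma WalkOK.mono {S S' : Finset (Fin n)} {a b w} (hS : S ⊆ S')
    (h : WalkOK G S a b w) : WalkOK G S' a b w := by
  refine ⟨h.1, fun s hs => ?_, h.2.2⟩
  obtain ⟨x, y, h1, h2, h3, h4⟩ := h.2.1 s hs
  exact ⟨x, y, h1, h2, hS h3, hS h4⟩

inductive Linked (S : Finset (Fin n)) : Fin n → Fin n → List (Fin n) → List (List (Sym2 (Fin n))) → Prop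
  | single (v : Fin n) : Linked S v v [v] []
  | cons {a b c : Fin n} {w : List (Sym2 (Fin n))} {l ws} :
      WalkOK G S a b w → Linked S b c l ws → Linked S a c (a :: l) (w :: ws)

lemma Linked.mono {S S' : Finset (Fin n)} {a b l ws} (hS : S ⊆ S')
    (h : Linked G S a b l ws) : Linked G S' a b l ws := by
  induction h with
  | single v => exact .single v
  | cons hw _ ih => exact .cons (hw.mono G hS) ih

lemma Linked.append {S : Finset (Fin n)} {a b c d l1 ws1 w l2 ws2}
    (h1 : Linked G S a b l1 ws1) (hw : WalkOK G S b c w)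
    (h2 : Linked G S c d l2 ws2) :
    Linked G S a d (l1 ++ l2) (ws1 ++ w :: ws2) := by
  induction h1 with
  | single v => simpa using Linked.cons hw h2
  | cons hw1 _ ih => exact .cons hw1 (ih hw)

lemma Linked.reverse {S : Finset (Fin n)} {a b l ws} (h : Linked G S a b l ws) :
    Linked G S b a l.reverse ws.reverse := by
  induction h with
  | single v => exact .single v
  | cons hw _ ih =>
    simpa using ih.append G hw.symm (.single _)

lemma Linked.length {S : Finset (Fin n)} {a b l ws} (h : Linked G S a b l ws) :
    l.length = ws.length + 1 := by
  induction h with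
  | single v => rfl
  | cons _ _ ih => simp [ih]

lemma Linked.head_mem {S : Finset (Fin n)} {a b l ws} (h : Linked G S a b l ws) : a ∈ l := by
  cases h <;> simp

lemma Linked.last_mem {S : Finset (Fin n)} {a b l ws} (h : Linked G S a b l ws) : b ∈ l := by
  induction h with
  | single v => simp
  | cons _ _ ih => simp [ih]

lemma Linked.get {S : Finset (Fin n)} {a b l ws} (h : Linked G S a b l ws) :
    ∀ (i : ℕ) (hi : i < ws.length),
      ∃ (h1 : i < l.length) (h2 : i + 1 < l.length),
        WalkOK G S (l.get ⟨i, h1⟩) (l.get ⟨i + 1, h2⟩) (ws.get ⟨i, hi⟩) := by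
  induction h with
  | single v => intro i hi; simp at hi
  | cons hw hl ih =>
    intro i hi
    match i with
    | 0 =>
      cases hl with
      | single v => exact ⟨by simp, by simp, by simpa using hw⟩
      | cons hw' h' => exact ⟨by simp, by simp, by simpa using hw⟩
    | i + 1 =>
      simp only [List.length_cons, Nat.add_lt_add_iff_right] at hi
      obtain ⟨h1, h2, hwk⟩ := ih i hi
      exact ⟨Nat.succ_lt_succ h1, Nat.succ_lt_succ h2, by simpa using hwk⟩


/-- total usage count of a pair over a list of walks -/
def cnt (p : Sym2 (Fin n)) (ws : List (List (Sym2 (Fin n)))) : ℕ :=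
  (ws.map (List.count p)).sum

@[simp] lemma cnt_nil (p : Sym2 (Fin n)) : cnt p [] = 0 := rfl

@[simp] lemma cnt_cons (p : Sym2 (Fin n)) (w ws) :
    cnt p (w :: ws) = List.count p w + cnt p ws := by simp [cnt]

@[simp] lemma cnt_append (p : Sym2 (Fin n)) (ws1 ws2) :
    cnt p (ws1 ++ ws2) = cnt p ws1 + cnt p ws2 := by simp [cnt]

@[simp] lemma cnt_reverse (p : Sym2 (Fin n)) (ws) :
    cnt p ws.reverse = cnt p ws := by simp [cnt, List.map_reverse, List.sum_reverse]

lemma exists_of_cnt_ne_zero {p : Sym2 (Fin n)} {ws} (h : cnt p ws ≠ 0) :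
    ∃ w ∈ ws, p ∈ w := by
  induction ws with
  | nil => simp at h
  | cons w ws ih =>
    rw [cnt_cons] at h
    by_cases h0 : List.count p w = 0
    · obtain ⟨w', h1, h2⟩ := ih (by omega)
      exact ⟨w', by simp [h1], h2⟩
    · exact ⟨w, by simp, List.count_pos_iff.1 (Nat.pos_of_ne_zero h0)⟩

lemma Linked.mem_walk {S : Finset (Fin n)} {a b l ws} (h : Linked G S a b l ws)
    {w} (hw : w ∈ ws) : ∃ a' b', WalkOK G S a' b' w := by
  induction h with
  | single v => simp at hw
  | cons hw' h' ih =>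
    rcases List.mem_cons.1 hw with h1 | h1
    · exact ⟨_, _, h1 ▸ hw'⟩
    · exact ih h1

lemma Linked.cnt_pos {S : Finset (Fin n)} {a b l ws} (h : Linked G S a b l ws)
    {p} (hp : cnt p ws ≠ 0) : ∃ x y, p = s(x, y) ∧ x ∈ S ∧ y ∈ S := by
  obtain ⟨w, hw, hpw⟩ := exists_of_cnt_ne_zero hp
  obtain ⟨a', b', hwo⟩ := h.mem_walk G hw
  obtain ⟨x, y, h1, _, h3, h4⟩ := hwo.2.1 p hpw
  exact ⟨x, y, h1, h3, h4⟩

/-- one step of reachability inside `S` -/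
def Step (S : Finset (Fin n)) (a b : Fin n) : Prop := a ∈ S ∧ b ∈ S ∧ Adj2 G a b

def Reach (S : Finset (Fin n)) : Fin n → Fin n → Prop :=
  Relation.ReflTransGen (Step G S)

lemma step_symm {S : Finset (Fin n)} : Symmetric (Step G S) :=
  fun _ _ h => ⟨h.2.1, h.1, h.2.2.symm G⟩

lemma Reach.symm' {S : Finset (Fin n)} {a b} (h : Reach G S a b) : Reach G S b a :=
  by
    haveI : Std.Symm (Step G S) := ⟨fun _ _ h' => step_symm G h'⟩
    exact (Relation.ReflTransGen.symmetric (r := Step G S)).symm _ _ h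

lemma chi_trans (a b c : Fin n) : chi s(a, b) + chi s(b, c) = chi s(a, c) := by
  funext v
  simp only [Pi.add_apply, chi_mk]
  generalize (if v = a then (1 : ZMod 2) else 0) = A
  generalize (if v = b then (1 : ZMod 2) else 0) = B
  generalize (if v = c then (1 : ZMod 2) else 0) = C
  revert A B C
  decide


lemma build : ∀ (k : ℕ) (S : Finset (Fin n)), S.card ≤ k →
    (∀ a ∈ S, ∀ b ∈ S, Reach G S a b) → ∀ r, r ∈ S →
    ∃ l ws w, Linked G S r w l ws ∧ l.Nodup ∧ l.toFinset = S ∧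
      (∀ p, cnt p ws ≤ 2) ∧ cnt s(r, w) ws ≤ 1 ∧ (w = r ∨ Adj2 G r w) := by
  intro k
  induction k with
  | zero =>
    intro S hcard _ r hr
    exact absurd (Finset.card_pos.2 ⟨r, hr⟩) (by omega)
  | succ k ih =>
    intro S hcard hconn r hr
    classical
    by_cases hsing : S.card = 1
    · obtain ⟨a, ha⟩ := Finset.card_eq_one.1 hsing
      have hra : r = a := by rw [ha] at hr; simpa using hr
      subst hra
      exact ⟨[r], [], r, .single r, by simp, by simp [ha], by simp [cnt],
        by simp [cnt], Or.inl rfl⟩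
    · have h2 : 2 ≤ S.card := by
        have : 1 ≤ S.card := Finset.card_pos.2 ⟨r, hr⟩
        omega
      obtain ⟨x, hx⟩ : (S.erase r).Nonempty := by
        rw [← Finset.card_pos, Finset.card_erase_of_mem hr]; omega
      have hxS := Finset.mem_of_mem_erase hx
      have hxr : x ≠ r := Finset.ne_of_mem_erase hx
      obtain ⟨c, hstep, -⟩ : ∃ c, Step G S r c ∧ Reach G S c x := by
        rcases (hconn r hr x hxS).cases_head with h | h
        · exact absurd h.symm hxr
        · exact h
      have hcS : c ∈ S := hstep.2.1
      have hrc : Adj2 G r c := hstep.2.2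
      have hcr : c ≠ r := fun h => hrc.1 h.symm
      set S' := S.erase r with hS'
      have hcS' : c ∈ S' := Finset.mem_erase.2 ⟨hcr, hcS⟩
      set C := S'.filter (fun y => Reach G S' c y) with hC
      have hcC : c ∈ C := Finset.mem_filter.2 ⟨hcS', .refl⟩
      have hCS' : C ⊆ S' := Finset.filter_subset _ _
      have hCS : C ⊆ S := hCS'.trans (Finset.erase_subset _ _)
      have hrC : r ∉ C := fun h => (Finset.mem_erase.1 (hCS' h)).1 rfl
      -- C is connected
      have keyC : ∀ y ∈ C, Reach G C c y := by
        intro y hyC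
        have hy' := (Finset.mem_filter.1 hyC).2
        clear hyC
        induction hy' with
        | refl => exact .refl
        | tail hrb hstep2 ih2 =>
          rename_i b a
          have hbC : b ∈ C := Finset.mem_filter.2 ⟨hstep2.1, hrb⟩
          have haC : a ∈ C := Finset.mem_filter.2 ⟨hstep2.2.1, hrb.tail hstep2⟩
          exact ih2.tail ⟨hbC, haC, hstep2.2.2⟩
      have hconnC : ∀ a ∈ C, ∀ b ∈ C, Reach G C a b := fun a ha b hb =>
        (Reach.symm' G (keyC a ha)).trans (keyC b hb)
      have hrSC : r ∈ S \ C := Finset.mem_sdiff.2 ⟨hr, hrC⟩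
      have keySC : ∀ y ∈ S \ C, Reach G (S \ C) r y := by
        intro y hySC
        have hy' : Reach G S r y := hconn r hr y (Finset.mem_sdiff.1 hySC).1
        have hQ : y ∈ C ∨ (y ∈ S \ C ∧ Reach G (S \ C) r y) := by
          clear hySC
          induction hy' with
          | refl => exact Or.inr ⟨hrSC, .refl⟩
          | tail hrb hstep2 ih2 =>
            rename_i b a
            by_cases haC : a ∈ C
            · exact Or.inl haC
            · have haSC : a ∈ S \ C := Finset.mem_sdiff.2 ⟨hstep2.2.1, haC⟩
              rcases ih2 with hbC | ⟨hbSC, hreach⟩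
              · by_cases har : a = r
                · exact Or.inr ⟨haSC, har ▸ Relation.ReflTransGen.refl⟩
                · exfalso
                  have haS' : a ∈ S' := Finset.mem_erase.2 ⟨har, hstep2.2.1⟩
                  have hbS' : b ∈ S' := hCS' hbC
                  have : Reach G S' c a :=
                    ((Finset.mem_filter.1 hbC).2).tail ⟨hbS', haS', hstep2.2.2⟩
                  exact haC (Finset.mem_filter.2 ⟨haS', this⟩)
              · exact Or.inr ⟨haSC, hreach.tail ⟨hbSC, haSC, hstep2.2.2⟩⟩
        rcases hQ with h | h
        · exact absurd h (Finset.mem_sdiff.1 hySC).2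
        · exact h.2
      have hconnSC : ∀ a ∈ S \ C, ∀ b ∈ S \ C, Reach G (S \ C) a b := fun a ha b hb =>
        (Reach.symm' G (keySC a ha)).trans (keySC b hb)
      have hCk : C.card ≤ k := by
        have := Finset.card_le_card hCS'
        rw [Finset.card_erase_of_mem hr] at this; omega
      have hSCk : (S \ C).card ≤ k := by
        have hsub : S \ C ⊆ S.erase c := by
          intro y hy
          rcases Finset.mem_sdiff.1 hy with ⟨hyS, hyC⟩
          exact Finset.mem_erase.2 ⟨fun h => hyC (h ▸ hcC), hyS⟩
        have := Finset.card_le_card hsub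
        rw [Finset.card_erase_of_mem hcS] at this; omega
      obtain ⟨l1, ws1, w1, hL1, hnd1, htf1, hcnt1, hcnt1', hadj1⟩ :=
        ih (S \ C) hSCk hconnSC r hrSC
      obtain ⟨l2, ws2, w2, hL2, hnd2, htf2, hcnt2, hcnt2', hadj2⟩ :=
        ih C hCk hconnC c hcC
      have hw1 : w1 ∈ S \ C := htf1 ▸ List.mem_toFinset.2 (hL1.last_mem G)
      have hw2 : w2 ∈ C := htf2 ▸ List.mem_toFinset.2 (hL2.last_mem G)
      have hw1S : w1 ∈ S := (Finset.mem_sdiff.1 hw1).1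
      have hw1C : w1 ∉ C := (Finset.mem_sdiff.1 hw1).2
      have hw2S : w2 ∈ S := hCS hw2
      set J : List (Sym2 (Fin n)) :=
        (if w1 = r then [] else [s(w1, r)]) ++
          s(r, c) :: (if w2 = c then [] else [s(c, w2)]) with hJdef
      have hadjw1 : w1 ≠ r → Adj2 G w1 r := by
        intro h
        rcases hadj1 with h' | h'
        · exact absurd h' h
        · exact h'.symm G
      have hadjw2 : w2 ≠ c → Adj2 G c w2 := by
        intro h
        rcases hadj2 with h' | h'
        · exact absurd h' h
        · exact h'
      have hmemJ : ∀ p ∈ J, p = s(w1, r) ∨ p = s(r, c) ∨ p = s(c, w2) := by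
        intro p hp
        rw [hJdef] at hp
        rcases List.mem_append.1 hp with hp | hp
        · split_ifs at hp
          · simp at hp
          · exact Or.inl (List.mem_singleton.1 hp)
        · rcases List.mem_cons.1 hp with hp | hp
          · exact Or.inr (Or.inl hp)
          · split_ifs at hp
            · simp at hp
            · exact Or.inr (Or.inr (List.mem_singleton.1 hp))
      have d1 : s(w1, r) ≠ s(r, c) := by
        intro h
        rcases Sym2.eq_iff.1 h with ⟨h1, h2⟩ | ⟨h1, h2⟩
        · exact hcr h2.symm
        · exact hw1C (h1 ▸ hcC)
      have d2 : s(w1, r) ≠ s(c, w2) := by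
        intro h
        rcases Sym2.eq_iff.1 h with ⟨h1, h2⟩ | ⟨h1, h2⟩
        · exact hw1C (h1 ▸ hcC)
        · exact hw1C (h1 ▸ hw2)
      have d3 : s(r, c) ≠ s(c, w2) := by
        intro h
        rcases Sym2.eq_iff.1 h with ⟨h1, h2⟩ | ⟨h1, h2⟩
        · exact hcr h1.symm
        · exact hrC (h1 ▸ hw2)
      have hndJ : J.Nodup := by
        rw [hJdef]
        rcases eq_or_ne w1 r with h | h <;> rcases eq_or_ne w2 c with h' | h' <;>
          simp [h, h', d1, d2, d3]
      have hcntJ : ∀ p, List.count p J ≤ 1 := List.nodup_iff_count_le_one.1 hndJ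
      have hJok : WalkOK G S w1 w2 J := by
        have m1 : w1 ≠ r → (∃ x y, s(w1, r) = s(x, y) ∧ Adj2 G x y ∧ x ∈ S ∧ y ∈ S) :=
          fun h => ⟨w1, r, rfl, hadjw1 h, hw1S, hr⟩
        have m2 : ∃ x y, s(r, c) = s(x, y) ∧ Adj2 G x y ∧ x ∈ S ∧ y ∈ S :=
          ⟨r, c, rfl, hrc, hr, hcS⟩
        have m3 : w2 ≠ c → (∃ x y, s(c, w2) = s(x, y) ∧ Adj2 G x y ∧ x ∈ S ∧ y ∈ S) :=
          fun h => ⟨c, w2, rfl, hadjw2 h, hcS, hw2S⟩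
        rw [hJdef]
        rcases eq_or_ne w1 r with h | h <;> rcases eq_or_ne w2 c with h' | h'
        · refine ⟨by simp [h, h'], ?_, ?_⟩
          · intro s hs
            simp only [if_pos h, if_pos h', List.nil_append, List.mem_singleton] at hs
            subst hs; exact m2
          · simp only [if_pos h, if_pos h', List.nil_append, List.map_cons, List.map_nil,
              List.sum_cons, List.sum_nil, add_zero]
            rw [h, h']
        · refine ⟨by simp [h, h'], ?_, ?_⟩
          · intro s hs
            simp only [if_pos h, if_neg h', List.nil_append, List.mem_cons,
              List.mem_singleton, List.not_mem_nil, or_false] at hs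
            rcases hs with hs | hs <;> subst hs
            · exact m2
            · exact m3 h'
          · simp only [if_pos h, if_neg h', List.nil_append, List.map_cons, List.map_nil,
              List.sum_cons, List.sum_nil, add_zero]
            rw [h, chi_trans]
        · refine ⟨by simp [h, h'], ?_, ?_⟩
          · intro s hs
            simp only [if_neg h, if_pos h', List.cons_append, List.nil_append, List.mem_cons,
              List.mem_singleton, List.not_mem_nil, or_false] at hs
            rcases hs with hs | hs <;> subst hs
            · exact m1 h
            · exact m2
          · simp only [if_neg h, if_pos h', List.cons_append, List.nil_append, List.map_cons,
              List.map_nil, List.sum_cons, List.sum_nil, add_zero]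
            rw [h', chi_trans]
        · refine ⟨by simp [h, h'], ?_, ?_⟩
          · intro s hs
            simp only [if_neg h, if_neg h', List.cons_append, List.nil_append, List.mem_cons,
              List.mem_singleton, List.not_mem_nil, or_false] at hs
            rcases hs with hs | hs | hs <;> subst hs
            · exact m1 h
            · exact m2
            · exact m3 h'
          · simp only [if_neg h, if_neg h', List.cons_append, List.nil_append, List.map_cons,
              List.map_nil, List.sum_cons, List.sum_nil, add_zero]
            rw [← add_assoc, chi_trans, chi_trans]
      refine ⟨l1 ++ l2.reverse, ws1 ++ J :: ws2.reverse, c,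
        (hL1.mono G Finset.sdiff_subset).append G hJok ((hL2.reverse G).mono G hCS),
        ?_, ?_, ?_, ?_, Or.inr hrc⟩
      · rw [List.nodup_append]
        refine ⟨hnd1, List.nodup_reverse.2 hnd2, ?_⟩
        rintro a ha _ ha2 rfl
        have h1 : a ∈ S \ C := htf1 ▸ List.mem_toFinset.2 ha
        have h2 : a ∈ C := htf2 ▸ List.mem_toFinset.2 (List.mem_reverse.1 ha2)
        exact (Finset.mem_sdiff.1 h1).2 h2
      · rw [List.toFinset_append, List.toFinset_reverse, htf1, htf2]
        exact Finset.sdiff_union_of_subset hCS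
      · intro p
        rw [cnt_append, cnt_cons, cnt_reverse]
        by_cases hp1 : cnt p ws1 = 0
        · by_cases hp2 : cnt p ws2 = 0
          · have := hcntJ p; omega
          · obtain ⟨x, y, hpxy, hxC, hyC⟩ := hL2.cnt_pos G hp2
            by_cases hpJ : List.count p J = 0
            · have := hcnt2 p; omega
            · rcases hmemJ p (List.count_pos_iff.1 (Nat.pos_of_ne_zero hpJ)) with h | h | h
              · exfalso
                rcases Sym2.eq_iff.1 (h.symm.trans hpxy) with ⟨e1, e2⟩ | ⟨e1, e2⟩
                · exact hrC (by rw [e2]; exact hyC)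
                · exact hrC (by rw [e2]; exact hxC)
              · exfalso
                rcases Sym2.eq_iff.1 (h.symm.trans hpxy) with ⟨e1, e2⟩ | ⟨e1, e2⟩
                · exact hrC (by rw [e1]; exact hxC)
                · exact hrC (by rw [e1]; exact hyC)
              · have hle : cnt p ws2 ≤ 1 := by rw [h]; exact hcnt2'
                have := hcntJ p; omega
        · have hp2 : cnt p ws2 = 0 := by
            by_contra h0
            obtain ⟨x, y, hpxy, hxSC, hySC⟩ := hL1.cnt_pos G hp1
            obtain ⟨x', y', hpxy', hx'C, hy'C⟩ := hL2.cnt_pos G h0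
            rcases Sym2.eq_iff.1 (hpxy.symm.trans hpxy') with ⟨e1, e2⟩ | ⟨e1, e2⟩
            · exact (Finset.mem_sdiff.1 hxSC).2 (by rw [e1]; exact hx'C)
            · exact (Finset.mem_sdiff.1 hxSC).2 (by rw [e1]; exact hy'C)
          obtain ⟨x, y, hpxy, hxSC, hySC⟩ := hL1.cnt_pos G hp1
          by_cases hpJ : List.count p J = 0
          · have := hcnt1 p; omega
          · rcases hmemJ p (List.count_pos_iff.1 (Nat.pos_of_ne_zero hpJ)) with h | h | h
            · have hle : cnt p ws1 ≤ 1 := by rw [h, Sym2.eq_swap]; exact hcnt1'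
              have := hcntJ p; omega
            · exfalso
              rcases Sym2.eq_iff.1 (h.symm.trans hpxy) with ⟨e1, e2⟩ | ⟨e1, e2⟩
              · exact absurd hcC (Finset.mem_sdiff.1
                  (show c ∈ S \ C by rw [e2]; exact hySC)).2
              · exact absurd hcC (Finset.mem_sdiff.1
                  (show c ∈ S \ C by rw [e2]; exact hxSC)).2
            · exfalso
              rcases Sym2.eq_iff.1 (h.symm.trans hpxy) with ⟨e1, e2⟩ | ⟨e1, e2⟩
              · exact absurd hcC (Finset.mem_sdiff.1
                  (show c ∈ S \ C by rw [e1]; exact hxSC)).2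
              · exact absurd hcC (Finset.mem_sdiff.1
                  (show c ∈ S \ C by rw [e1]; exact hySC)).2
      · rw [cnt_append, cnt_cons, cnt_reverse]
        have h1 : cnt s(r, c) ws1 = 0 := by
          by_contra h0
          obtain ⟨x, y, hpxy, hx, hy⟩ := hL1.cnt_pos G h0
          rcases Sym2.eq_iff.1 hpxy with ⟨e1, e2⟩ | ⟨e1, e2⟩
          · exact absurd hcC (Finset.mem_sdiff.1
              (show c ∈ S \ C by rw [e2]; exact hy)).2
          · exact absurd hcC (Finset.mem_sdiff.1
              (show c ∈ S \ C by rw [e2]; exact hx)).2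
        have h2 : cnt s(r, c) ws2 = 0 := by
          by_contra h0
          obtain ⟨x, y, hpxy, hx, hy⟩ := hL2.cnt_pos G h0
          rcases Sym2.eq_iff.1 hpxy with ⟨e1, e2⟩ | ⟨e1, e2⟩
          · exact hrC (by rw [e1]; exact hx)
          · exact hrC (by rw [e1]; exact hy)
        have := hcntJ s(r, c); omega


lemma inc_row (hinc : ∀ e, (Finset.univ.filter fun v => G e v ≠ 0).card = 2)
    {e : Fin m} {x y : Fin n} (hxy : x ≠ y) (hx : G e x ≠ 0) (hy : G e y ≠ 0) :
    G e = chi s(x, y) := by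
  classical
  have hsub : ({x, y} : Finset (Fin n)) ⊆ Finset.univ.filter (fun v => G e v ≠ 0) := by
    intro v hv
    rcases Finset.mem_insert.1 hv with rfl | hv
    · simp [hx]
    · rcases Finset.mem_singleton.1 hv with rfl
      simp [hy]
  have heq : ({x, y} : Finset (Fin n)) = Finset.univ.filter (fun v => G e v ≠ 0) :=
    Finset.eq_of_subset_of_card_le hsub (by rw [hinc e, Finset.card_pair hxy])
  have hv2 : ∀ a : ZMod 2, a = 0 ∨ a = 1 := by decide
  funext v
  have hmem : v ∈ ({x, y} : Finset (Fin n)) ↔ G e v ≠ 0 := by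
    rw [heq]; simp
  rcases hv2 (G e v) with h | h
  · have : v ∉ ({x, y} : Finset (Fin n)) := fun hm => (hmem.1 hm) h
    simp only [Finset.mem_insert, Finset.mem_singleton, not_or] at this
    rw [h, chi_mk, if_neg this.1, if_neg this.2, add_zero]
  · have : v ∈ ({x, y} : Finset (Fin n)) := hmem.2 (by rw [h]; exact one_ne_zero)
    simp only [Finset.mem_insert, Finset.mem_singleton] at this
    rw [h, chi_mk]
    rcases this with rfl | rfl
    · rw [if_pos rfl, if_neg hxy, add_zero]
    · rw [if_neg (Ne.symm hxy), if_pos rfl, zero_add]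

lemma chi_inj {x y a b : Fin n} (hxy : x ≠ y) (h : chi s(x, y) = chi s(a, b)) :
    s(x, y) = s(a, b) := by
  have h1 := congrFun h x
  have h2 := congrFun h y
  rw [Sym2.eq_iff]
  simp only [chi_mk, if_pos rfl] at h1 h2
  rw [if_neg hxy] at h1
  rw [if_neg (Ne.symm hxy)] at h2
  by_cases h3 : x = a <;> by_cases h4 : x = b <;> by_cases h5 : y = a <;>
    by_cases h6 : y = b <;> first | simp_all | tauto

lemma map_sum_nat {α : Type*} (l : List α) (g : α → ℕ) :
    ∑ i : Fin l.length, g (l.get i) = (l.map g).sum := by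
  induction l with
  | nil => simp
  | cons a l ih =>
    simp only [List.map_cons, List.sum_cons, List.length_cons, Fin.sum_univ_succ,
      List.get_cons_zero, List.get_cons_succ, ih]
    rw [← ih]
    rfl

open Classical in
noncomputable def pickF : Sym2 (Fin n) → Option (Fin m) := fun s =>
  if h : ∃ e, G e = chi s then some h.choose else none

lemma pickF_spec {s : Sym2 (Fin n)} (h : ∃ e, G e = chi s) :
    ∃ e, pickF G s = some e ∧ G e = chi s :=
  ⟨h.choose, dif_pos h, h.choose_spec⟩

lemma pickF_eq_some {s : Sym2 (Fin n)} {e : Fin m} (h : pickF G s = some e) :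
    G e = chi s := by
  unfold pickF at h
  split at h
  · rename_i h'
    cases h
    exact h'.choose_spec
  · cases h

lemma row_sum (v : Fin n) : ∀ (w : List (Sym2 (Fin n))), (∀ s ∈ w, ∃ e0, G e0 = chi s) →
    ∑ e : Fin m, (((w.map (pickF G)).count (some e) : ℕ) : ZMod 2) * G e v
      = ((w.map chi).sum : Fin n → ZMod 2) v := by
  intro w
  induction w with
  | nil => simp
  | cons s w ih =>
    intro hgood
    obtain ⟨e0, he0, hGe0⟩ := pickF_spec G (hgood s (by simp))
    have ihs := ih (fun s' hs' => hgood s' (by simp [hs']))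
    rw [List.map_cons, List.map_cons, List.sum_cons]
    have hcount : ∀ e : Fin m, ((pickF G s :: w.map (pickF G)).count (some e))
        = (w.map (pickF G)).count (some e) + if e0 = e then 1 else 0 := by
      intro e
      rw [List.count_cons, he0]
      congr 1
      simp [beq_iff_eq]
    calc ∑ e : Fin m, (((pickF G s :: w.map (pickF G)).count (some e) : ℕ) : ZMod 2) * G e v
        = ∑ e : Fin m, ((((w.map (pickF G)).count (some e) : ℕ) : ZMod 2) * G e v
            + (if e0 = e then 1 else 0) * G e v) := by
          refine Finset.sum_congr rfl fun e _ => ?_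
          rw [hcount e]
          push_cast
          ring
      _ = (∑ e : Fin m, (((w.map (pickF G)).count (some e) : ℕ) : ZMod 2) * G e v)
            + ∑ e : Fin m, (if e0 = e then (1 : ZMod 2) else 0) * G e v :=
          Finset.sum_add_distrib
      _ = ((w.map chi).sum : Fin n → ZMod 2) v + G e0 v := by
          rw [ihs]
          congr 1
          simp only [ite_mul, one_mul, zero_mul]
          rw [Finset.sum_ite_eq]
          simp
      _ = (chi s + (w.map chi).sum) v := by
          rw [Pi.add_apply, ← hGe0]
          exact add_comm _ _

end SkipTreeAux

open SkipTreeAux in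
/-- For any connected graph with incidence matrix `G ∈ F₂^{m×n}`, there
exist a `(3,2)`-sparse matrix `T' ∈ F₂^{(n−1)×m}` and a permutation matrix `P'` with
`T'·G·P' = H_R`. -/
theorem skipTree_fullRank {n m : ℕ} (G : Matrix (Fin m) (Fin n) (ZMod 2))
    (hinc : IsIncidence G) (hconn : (incGraph G).Connected) :
    ∃ (T' : Matrix (Fin (n - 1)) (Fin m) (ZMod 2)) (P' : Matrix (Fin n) (Fin n) (ZMod 2)),
      Sparse T' 3 2 ∧ IsPermMatrix P' ∧ T' * G * P' = HR n := by
  classical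
  obtain ⟨v0⟩ := hconn.nonempty
  have hn : 0 < n := v0.pos
  have hinc' : ∀ e, (Finset.univ.filter fun v => G e v ≠ 0).card = 2 := hinc
  have hconn' : ∀ a ∈ (Finset.univ : Finset (Fin n)), ∀ b ∈ (Finset.univ : Finset (Fin n)),
      Reach G Finset.univ a b := by
    intro a _ b _
    have hr := hconn.preconnected a b
    rw [SimpleGraph.reachable_iff_reflTransGen] at hr
    refine Relation.ReflTransGen.mono ?_ _ _ hr
    intro x y hxy
    rw [incGraph, SimpleGraph.fromRel_adj] at hxy
    refine ⟨Finset.mem_univ x, Finset.mem_univ y, hxy.1, ?_⟩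
    rcases hxy.2 with ⟨e, h1, h2⟩ | ⟨e, h1, h2⟩
    · exact ⟨e, h1, h2⟩
    · exact ⟨e, h2, h1⟩
  obtain ⟨l, ws, w, hL, hnd, htf, hcnt, -, -⟩ :=
    build G n Finset.univ (by simp) hconn' v0 (Finset.mem_univ v0)
  have hlen : l.length = n := by
    have h := List.toFinset_card_of_nodup hnd
    rw [htf] at h
    simpa using h.symm
  have hwslen : ws.length = n - 1 := by
    have := hL.length G
    omega
  let vg : Fin n → Fin n := fun j => l.get ⟨j, by rw [hlen]; exact j.isLt⟩
  have hvg_inj : Function.Injective vg := by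
    intro i j hij
    have h := (List.Nodup.get_inj_iff hnd).1 hij
    have h2 : (i : ℕ) = (j : ℕ) := by simpa using congrArg Fin.val h
    exact Fin.ext h2
  have hvg_bij : Function.Bijective vg := Finite.injective_iff_bijective.1 hvg_inj
  let σ : Equiv.Perm (Fin n) := Equiv.ofBijective vg hvg_bij
  have hwlt : ∀ i : Fin (n - 1), (i : ℕ) < ws.length := fun i => by
    rw [hwslen]; exact i.isLt
  let wk : Fin (n - 1) → List (Sym2 (Fin n)) := fun i => ws.get ⟨i, hwlt i⟩
  have hwo : ∀ i : Fin (n - 1), ∃ (h1 : (i : ℕ) < l.length) (h2 : (i : ℕ) + 1 < l.length),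
      WalkOK G Finset.univ (l.get ⟨i, h1⟩) (l.get ⟨(i : ℕ) + 1, h2⟩) (wk i) :=
    fun i => hL.get G i (hwlt i)
  have hgood : ∀ i : Fin (n - 1), ∀ s ∈ wk i, ∃ e0, G e0 = chi s := by
    intro i s hs
    obtain ⟨h1, h2, hw⟩ := hwo i
    obtain ⟨x, y, hsxy, hadj, -, -⟩ := hw.2.1 s hs
    obtain ⟨hne, e, hex, hey⟩ := hadj
    exact ⟨e, by rw [hsxy]; exact inc_row G hinc' hne hex hey⟩
  have hproper : ∀ i : Fin (n - 1), ∀ s ∈ wk i, ∃ x y, s = s(x, y) ∧ x ≠ y := by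
    intro i s hs
    obtain ⟨h1, h2, hw⟩ := hwo i
    obtain ⟨x, y, hsxy, hadj, -, -⟩ := hw.2.1 s hs
    exact ⟨x, y, hsxy, hadj.1⟩
  refine ⟨fun i e => (((wk i).map (pickF G)).count (some e) : ℕ),
    fun i j => if σ.symm i = j then 1 else 0, ⟨?_, ?_⟩, ⟨σ.symm, fun i j => rfl⟩, ?_⟩
  · -- row sparsity
    intro i
    show (Finset.univ.filter fun e => _ ≠ 0).card ≤ 3
    have hsub : (Finset.univ.filter fun e : Fin m =>
        ((((wk i).map (pickF G)).count (some e) : ℕ) : ZMod 2) ≠ 0)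
        ⊆ ((wk i).filterMap (pickF G)).toFinset := by
      intro e he
      have he' : ((wk i).map (pickF G)).count (some e) ≠ 0 := by
        intro h0
        exact (Finset.mem_filter.1 he).2 (by rw [h0]; simp)
      have hmem : some e ∈ (wk i).map (pickF G) :=
        List.count_pos_iff.1 (Nat.pos_of_ne_zero he')
      obtain ⟨s, hs, hse⟩ := List.mem_map.1 hmem
      exact List.mem_toFinset.2 (List.mem_filterMap.2 ⟨s, hs, hse⟩)
    calc (Finset.univ.filter fun e : Fin m =>
        ((((wk i).map (pickF G)).count (some e) : ℕ) : ZMod 2) ≠ 0).card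
        ≤ ((wk i).filterMap (pickF G)).toFinset.card := Finset.card_le_card hsub
      _ ≤ ((wk i).filterMap (pickF G)).length := List.toFinset_card_le _
      _ ≤ (wk i).length := List.length_filterMap_le _ _
      _ ≤ 3 := (hwo i).choose_spec.choose_spec.1
  · -- column sparsity
    intro e
    show (Finset.univ.filter fun i => _ ≠ 0).card ≤ 2
    by_cases hF : (Finset.univ.filter fun i : Fin (n - 1) =>
        ((((wk i).map (pickF G)).count (some e) : ℕ) : ZMod 2) ≠ 0) = ∅
    · rw [hF, Finset.card_empty]; omega
    · obtain ⟨i0, hi0⟩ := Finset.nonempty_of_ne_empty hF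
      have hi0' : ((((wk i0).map (pickF G)).count (some e) : ℕ) : ZMod 2) ≠ 0 :=
        (Finset.mem_filter.1 hi0).2
      have hcount0 : ((wk i0).map (pickF G)).count (some e) ≠ 0 := by
        intro h0; exact hi0' (by rw [h0]; simp)
      obtain ⟨s0, hs0mem, hs0pick⟩ :=
        List.mem_map.1 (List.count_pos_iff.1 (Nat.pos_of_ne_zero hcount0))
      obtain ⟨x0, y0, hs0xy, hxy0⟩ := hproper i0 s0 hs0mem
      have hGe : G e = chi s0 := pickF_eq_some G hs0pick
      have hkey : ∀ i : Fin (n - 1),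
          ((((wk i).map (pickF G)).count (some e) : ℕ) : ZMod 2) ≠ 0 →
          1 ≤ (wk i).count s0 := by
        intro i hi
        have hcnt' : ((wk i).map (pickF G)).count (some e) ≠ 0 := by
          intro h0; exact hi (by rw [h0]; simp)
        have hle : ((wk i).map (pickF G)).count (some e) ≤ (wk i).count s0 := by
          rw [List.count, List.count, List.countP_map]
          refine List.countP_mono_left fun s hs hpe => ?_
          have hpe' : pickF G s = some e := by simpa using hpe
          have hGs : G e = chi s := pickF_eq_some G hpe'
          obtain ⟨x, y, hsxy, hxy⟩ := hproper i s hs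
          have hcc : chi s(x, y) = chi s(x0, y0) := by
            rw [← hsxy, ← hGs, hGe, hs0xy]
          have : s = s0 := by rw [hsxy, hs0xy]; exact chi_inj hxy hcc
          simpa using this
        omega
      calc (Finset.univ.filter fun i : Fin (n - 1) =>
          ((((wk i).map (pickF G)).count (some e) : ℕ) : ZMod 2) ≠ 0).card
          ≤ ∑ i : Fin (n - 1), (wk i).count s0 := by
            rw [Finset.card_eq_sum_ones]
            refine le_trans (Finset.sum_le_sum fun i hi =>
              hkey i (Finset.mem_filter.1 hi).2) ?_
            exact Finset.sum_le_sum_of_subset (Finset.filter_subset _ _)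
        _ = ∑ i : Fin ws.length, (ws.get i).count s0 :=
            Fintype.sum_equiv (finCongr hwslen.symm) _ _ (fun i => rfl)
        _ = (ws.map (List.count s0)).sum := map_sum_nat ws (List.count s0)
        _ ≤ 2 := hcnt s0
  · -- the product equals HR n
    ext i j
    obtain ⟨h1, h2, hw⟩ := hwo i
    have hTG : ∀ v, (∑ e : Fin m,
        ((((wk i).map (pickF G)).count (some e) : ℕ) : ZMod 2) * G e v)
        = chi s(l.get ⟨i, h1⟩, l.get ⟨(i : ℕ) + 1, h2⟩) v := by
      intro v
      rw [row_sum G v (wk i) (hgood i), hw.2.2]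
    have hj : (j : ℕ) < l.length := by rw [hlen]; exact j.isLt
    change (Matrix.of (fun i e => ((((wk i).map (pickF G)).count (some e) : ℕ) : ZMod 2)) * G *
      Matrix.of (fun i j => if σ.symm i = j then (1 : ZMod 2) else 0)) i j = _
    simp only [Matrix.mul_apply, Matrix.of_apply]
    simp only [hTG]
    simp only [Equiv.symm_apply_eq, mul_ite, mul_one, mul_zero]
    rw [Finset.sum_ite_eq' Finset.univ (σ j)]
    simp only [Finset.mem_univ, if_true]
    have hσj : σ j = l.get ⟨(j : ℕ), hj⟩ := rfl
    rw [hσj, chi_mk]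
    have e1 : (l.get ⟨(j : ℕ), hj⟩ = l.get ⟨(i : ℕ), h1⟩) ↔ (j : ℕ) = (i : ℕ) := by
      rw [List.Nodup.get_inj_iff hnd, Fin.mk_eq_mk]
    have e2 : (l.get ⟨(j : ℕ), hj⟩ = l.get ⟨(i : ℕ) + 1, h2⟩) ↔ (j : ℕ) = (i : ℕ) + 1 := by
      rw [List.Nodup.get_inj_iff hnd, Fin.mk_eq_mk]
    have hne : l.get ⟨(i : ℕ), h1⟩ ≠ l.get ⟨(i : ℕ) + 1, h2⟩ := by
      intro h
      have := (List.Nodup.get_inj_iff hnd).1 h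
      rw [Fin.mk_eq_mk] at this
      omega
    show _ = HR n i j
    rw [HR, Matrix.of_apply]
    by_cases hj1 : (j : ℕ) = (i : ℕ) <;> by_cases hj2 : (j : ℕ) = (i : ℕ) + 1
    · omega
    · rw [if_pos (e1.mpr hj1), if_neg (fun h => hj2 (e2.mp h)), if_pos (Or.inl hj1), add_zero]
    · rw [if_neg (fun h => hj1 (e1.mp h)), if_pos (e2.mpr hj2), if_pos (Or.inr hj2), zero_add]
    · rw [if_neg (fun h => hj1 (e1.mp h)), if_neg (fun h => hj2 (e2.mp h)),
        if_neg (by tauto), add_zero]
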